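/- If {φ_i}_{i=1}^M is a unit norm frame for ℂ^N, then the largest eigenvalue of the matrix G = [|⟨φ_i, φ_j⟩|²]_{i,j=1}^M is at least M/N. Moreover, equality holds if and only if {φ_i}_{i=1}^M is a tight frame (i.e., Σ_i |⟨ψ, φ_i⟩|² = (M/N)‖ψ‖² for all ψ). -/

import Mathlib

open scoped BigOperators
open Matrix

/-- The induced outer product `φφ*` of a vector `φ ∈ ℂ^N`. -/
noncomputable def outerProd {N : ℕ} (φ : Fin N → ℂ) : Matrix (Fin N) (Fin N) ℂ :=
  Matrix.of fun i j => φ i * star (φ j)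

/-- The Frobenius inner product `⟨S,T⟩_F = Tr(T* S)`. -/
noncomputable def frob {N : ℕ} (S T : Matrix (Fin N) (Fin N) ℂ) : ℂ :=
  Matrix.trace (T.conjTranspose * S)

/-- The standard inner product on `ℂ^N`. -/
noncomputable def cip {N : ℕ} (φ ψ : Fin N → ℂ) : ℂ :=
  ∑ i, φ i * star (ψ i)

theorem stmt_8 {N M : ℕ} [NeZero N] [NeZero M] (φ : Fin M → Fin N → ℂ)
    (hunit : ∀ i, cip (φ i) (φ i) = 1)
    (hframe : Submodule.span ℂ (Set.range φ) = ⊤)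
    (G : Matrix (Fin M) (Fin M) ℝ)
    (hGdef : ∀ i j, G i j = ‖cip (φ i) (φ j)‖ ^ 2)
    (hG : G.IsHermitian) :
    (M : ℝ) / N ≤ Finset.univ.sup' Finset.univ_nonempty hG.eigenvalues ∧
    (Finset.univ.sup' Finset.univ_nonempty hG.eigenvalues = (M : ℝ) / N ↔
      ∀ ψ : Fin N → ℂ, ∑ i, ‖cip ψ (φ i)‖ ^ 2 = ((M : ℝ) / N) * (cip ψ ψ).re) := by
  have hM : (0:ℝ) < M := Nat.cast_pos.2 (Nat.pos_of_ne_zero (NeZero.ne M))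
  have hN : (0:ℝ) < N := Nat.cast_pos.2 (Nat.pos_of_ne_zero (NeZero.ne N))
  set lam := Finset.univ.sup' Finset.univ_nonempty hG.eigenvalues with hlam
  set Sm : Fin N → Fin N → ℂ := fun k l => ∑ i, φ i k * star (φ i l) with hSm
  -- the quadratic form identity
  have hQ : ∀ ψ : Fin N → ℂ, ∑ i, cip ψ (φ i) * star (cip ψ (φ i)) =
      ∑ k, ∑ l, star (ψ k) * ψ l * Sm k l := by
    intro ψ
    simp only [cip, hSm, star_sum, star_mul', star_star, Finset.sum_mul, Finset.mul_sum]
    rw [Finset.sum_comm]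
    refine Finset.sum_congr rfl fun k _ => ?_
    rw [Finset.sum_comm]
    refine Finset.sum_congr rfl fun l _ => ?_
    exact Finset.sum_congr rfl fun i _ => by ring
  have habs : ∀ ψ : Fin N → ℂ, ∑ i, ‖cip ψ (φ i)‖ ^ 2 =
      (∑ k, ∑ l, star (ψ k) * ψ l * Sm k l).re := by
    intro ψ
    rw [← hQ ψ, Complex.re_sum]
    refine Finset.sum_congr rfl fun i _ => ?_
    rw [Complex.sq_norm, Complex.star_def, Complex.mul_conj]
    simp
  -- trace of S
  have htr : ∑ k, (Sm k k).re = (M:ℝ) := by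
    have : ∑ k, Sm k k = (M:ℂ) := by
      rw [Finset.sum_comm]
      have h1 : ∑ i : Fin M, ∑ k, φ i k * star (φ i k) = ∑ _i : Fin M, (1:ℂ) :=
        Finset.sum_congr rfl fun i _ => hunit i
      rw [h1]; simp
    calc ∑ k, (Sm k k).re = (∑ k, Sm k k).re := (Complex.re_sum _ _).symm
    _ = (M:ℝ) := by rw [this]; simp
  -- ∑∑ G = Frobenius norm of S squared
  have hGsum : ∑ i, ∑ j, G i j = ∑ k, ∑ l, Complex.normSq (Sm k l) := by
    have h1 : ∀ i j, G i j = Complex.normSq (cip (φ i) (φ j)) := by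
      intro i j; rw [hGdef, Complex.sq_norm]
    have h2 : ∑ i, ∑ j, (cip (φ i) (φ j) * star (cip (φ i) (φ j))) =
        ∑ k, ∑ l, star (Sm k l) * Sm k l := by
      rw [Finset.sum_comm]
      calc ∑ j, ∑ i, cip (φ i) (φ j) * star (cip (φ i) (φ j))
          = ∑ j, ∑ i, cip (φ j) (φ i) * star (cip (φ j) (φ i)) := by
            refine Finset.sum_congr rfl fun j _ => Finset.sum_congr rfl fun i _ => ?_
            have : cip (φ j) (φ i) = star (cip (φ i) (φ j)) := by
              simp only [cip, star_sum, star_mul', star_star]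
              exact Finset.sum_congr rfl fun k _ => mul_comm _ _
            rw [this, star_star]; ring
        _ = ∑ j, ∑ k, ∑ l, star (φ j k) * φ j l * Sm k l := by
            refine Finset.sum_congr rfl fun j _ => hQ (φ j)
        _ = ∑ k, ∑ l, star (Sm k l) * Sm k l := by
            rw [Finset.sum_comm]
            refine Finset.sum_congr rfl fun k _ => ?_
            rw [Finset.sum_comm]
            refine Finset.sum_congr rfl fun l _ => ?_
            show ∑ j, star (φ j k) * φ j l * Sm k l = _
            rw [hSm]
            simp only [star_sum, star_mul', star_star, Finset.sum_mul]
    have h3 : ∀ z : ℂ, Complex.normSq z = (z * star z).re := by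
      intro z; rw [Complex.star_def, Complex.mul_conj]; simp
    calc ∑ i, ∑ j, G i j = (∑ i, ∑ j, (cip (φ i) (φ j) * star (cip (φ i) (φ j)))).re := by
          rw [Complex.re_sum]
          refine Finset.sum_congr rfl fun i _ => ?_
          rw [Complex.re_sum]
          exact Finset.sum_congr rfl fun j _ => by rw [h1, h3]
      _ = (∑ k, ∑ l, star (Sm k l) * Sm k l).re := by rw [h2]
      _ = ∑ k, ∑ l, Complex.normSq (Sm k l) := by
          rw [Complex.re_sum]
          refine Finset.sum_congr rfl fun k _ => ?_
          rw [Complex.re_sum]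
          refine Finset.sum_congr rfl fun l _ => ?_
          rw [h3]
          congr 1
          ring
  -- Cauchy-Schwarz defect
  have hDiff : ∑ k, ∑ l, Complex.normSq (Sm k l - if k = l then (((M:ℝ)/N : ℝ) : ℂ) else 0)
      = (∑ k, ∑ l, Complex.normSq (Sm k l)) - (M:ℝ)^2 / N := by
    have hterm : ∀ k l, Complex.normSq (Sm k l - if k = l then (((M:ℝ)/N : ℝ) : ℂ) else 0)
        = Complex.normSq (Sm k l) +
          (if k = l then ((M:ℝ)/N)^2 - 2*((M:ℝ)/N)*(Sm k l).re else 0) := by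
      intro k l
      by_cases h : k = l
      · simp only [h, if_true]
        rw [Complex.normSq_sub]
        simp [Complex.normSq_ofReal, Complex.mul_re]
        ring
      · simp [h]
    calc ∑ k, ∑ l, Complex.normSq (Sm k l - if k = l then (((M:ℝ)/N : ℝ) : ℂ) else 0)
        = ∑ k, ∑ l, (Complex.normSq (Sm k l) +
            (if k = l then ((M:ℝ)/N)^2 - 2*((M:ℝ)/N)*(Sm k l).re else 0)) := by
          exact Finset.sum_congr rfl fun k _ => Finset.sum_congr rfl fun l _ => hterm k l
      _ = ∑ k, ((∑ l, Complex.normSq (Sm k l)) +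
            (((M:ℝ)/N)^2 - 2*((M:ℝ)/N)*(Sm k k).re)) := by
          refine Finset.sum_congr rfl fun k _ => ?_
          rw [Finset.sum_add_distrib]
          congr 1
          simp
      _ = (∑ k, ∑ l, Complex.normSq (Sm k l)) +
            ∑ k, (((M:ℝ)/N)^2 - 2*((M:ℝ)/N)*(Sm k k).re) := Finset.sum_add_distrib
      _ = (∑ k, ∑ l, Complex.normSq (Sm k l)) - (M:ℝ)^2 / N := by
          rw [Finset.sum_sub_distrib, Finset.sum_const, ← Finset.mul_sum, htr]
          simp only [Finset.card_univ, Fintype.card_fin, nsmul_eq_mul]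
          field_simp
          ring
  -- eigen decomposition, elementwise
  set w : Fin M → ℝ := fun k => ∑ i, hG.eigenvectorBasis k i with hw
  have hGentry : ∀ i j, G i j = ∑ k, hG.eigenvalues k *
      (hG.eigenvectorBasis k i * hG.eigenvectorBasis k j) := by
    intro i j
    conv_lhs => rw [hG.spectral_theorem, Unitary.conjStarAlgAut_apply]
    rw [Matrix.mul_apply]
    refine Finset.sum_congr rfl fun k _ => ?_
    rw [Matrix.mul_diagonal]
    simp [Matrix.conjTranspose_apply]
    ring
  have hsum1 : ∑ i, ∑ j, G i j = ∑ k, hG.eigenvalues k * (w k)^2 := by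
    calc ∑ i, ∑ j, G i j
        = ∑ i, ∑ j, ∑ k, hG.eigenvalues k *
            (hG.eigenvectorBasis k i * hG.eigenvectorBasis k j) :=
          Finset.sum_congr rfl fun i _ => Finset.sum_congr rfl fun j _ => hGentry i j
      _ = ∑ i, ∑ k, ∑ j, hG.eigenvalues k *
            (hG.eigenvectorBasis k i * hG.eigenvectorBasis k j) :=
          Finset.sum_congr rfl fun i _ => Finset.sum_comm
      _ = ∑ k, ∑ i, ∑ j, hG.eigenvalues k *
            (hG.eigenvectorBasis k i * hG.eigenvectorBasis k j) := Finset.sum_comm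
      _ = ∑ k, hG.eigenvalues k * (w k)^2 := by
          refine Finset.sum_congr rfl fun k _ => ?_
          rw [hw, sq, Finset.sum_mul_sum, Finset.mul_sum]
          exact Finset.sum_congr rfl fun i _ => by rw [Finset.mul_sum]
  have hUU : (hG.eigenvectorUnitary : Matrix (Fin M) (Fin M) ℝ) *
      star (hG.eigenvectorUnitary : Matrix (Fin M) (Fin M) ℝ) = 1 :=
    (Matrix.mem_unitaryGroup_iff).mp (hG.eigenvectorUnitary).2
  have horth : ∀ i j, ∑ k, hG.eigenvectorBasis k i * hG.eigenvectorBasis k j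
      = (1 : Matrix (Fin M) (Fin M) ℝ) i j := by
    intro i j
    have h2 := congrFun (congrFun hUU i) j
    rw [Matrix.mul_apply] at h2
    simpa [Matrix.conjTranspose_apply] using h2
  have hsum2 : ∑ k, (w k)^2 = (M:ℝ) := by
    calc ∑ k, (w k)^2 = ∑ k, ∑ i, ∑ j, hG.eigenvectorBasis k i * hG.eigenvectorBasis k j := by
          refine Finset.sum_congr rfl fun k _ => ?_
          rw [hw, sq, Finset.sum_mul_sum]
      _ = ∑ i, ∑ k, ∑ j, hG.eigenvectorBasis k i * hG.eigenvectorBasis k j :=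
          Finset.sum_comm
      _ = ∑ i, ∑ j, ∑ k, hG.eigenvectorBasis k i * hG.eigenvectorBasis k j :=
          Finset.sum_congr rfl fun i _ => Finset.sum_comm
      _ = ∑ i, ∑ j, (1 : Matrix (Fin M) (Fin M) ℝ) i j :=
          Finset.sum_congr rfl fun i _ => Finset.sum_congr rfl fun j _ => horth i j
      _ = (M:ℝ) := by simp [Matrix.one_apply]
  have hle : ∑ i, ∑ j, G i j ≤ lam * M := by
    rw [hsum1, ← hsum2, Finset.mul_sum]
    refine Finset.sum_le_sum fun k _ => ?_
    exact mul_le_mul_of_nonneg_right (Finset.le_sup' _ (Finset.mem_univ k)) (sq_nonneg _)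
  have hge : (M:ℝ)^2 / N ≤ ∑ i, ∑ j, G i j := by
    rw [hGsum]
    have h0 : 0 ≤ ∑ k, ∑ l, Complex.normSq (Sm k l - if k = l then (((M:ℝ)/N : ℝ) : ℂ) else 0) :=
      Finset.sum_nonneg fun k _ => Finset.sum_nonneg fun l _ => Complex.normSq_nonneg _
    linarith [hDiff]
  have hmain : (M : ℝ) / N ≤ lam := by
    have h1 : ((M:ℝ)/N) * M ≤ lam * M := by
      calc ((M:ℝ)/N) * M = (M:ℝ)^2 / N := by ring
        _ ≤ ∑ i, ∑ j, G i j := hge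
        _ ≤ lam * M := hle
    exact le_of_mul_le_mul_right h1 hM
  refine ⟨hmain, ?_, ?_⟩
  · -- equality → tight
    intro heq ψ
    have hDle : ∑ k, ∑ l, Complex.normSq (Sm k l - if k = l then (((M:ℝ)/N : ℝ) : ℂ) else 0) ≤ 0 := by
      have h1 : ∑ i, ∑ j, G i j ≤ ((M:ℝ)/N) * M := by rw [← heq]; exact hle
      have h2 : ((M:ℝ)/N) * M = (M:ℝ)^2/N := by ring
      rw [hDiff, ← hGsum]
      linarith
    have hD0 : ∀ k l, Sm k l = if k = l then (((M:ℝ)/N : ℝ) : ℂ) else 0 := by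
      intro k l
      have h0 : 0 ≤ ∑ k, ∑ l, Complex.normSq (Sm k l - if k = l then (((M:ℝ)/N : ℝ) : ℂ) else 0) :=
        Finset.sum_nonneg fun k _ => Finset.sum_nonneg fun l _ => Complex.normSq_nonneg _
      have hzero : ∑ k, ∑ l, Complex.normSq (Sm k l - if k = l then (((M:ℝ)/N : ℝ) : ℂ) else 0) = 0 :=
        le_antisymm hDle h0
      have h1 := (Finset.sum_eq_zero_iff_of_nonneg
        (fun k _ => Finset.sum_nonneg fun l _ => Complex.normSq_nonneg _)).mp hzero k (Finset.mem_univ k)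
      have h2 := (Finset.sum_eq_zero_iff_of_nonneg
        (fun l _ => Complex.normSq_nonneg _)).mp h1 l (Finset.mem_univ l)
      have := Complex.normSq_eq_zero.mp h2
      exact sub_eq_zero.mp this
    rw [habs ψ]
    have : ∑ k, ∑ l, star (ψ k) * ψ l * Sm k l = (((M:ℝ)/N : ℝ) : ℂ) * cip ψ ψ := by
      calc ∑ k, ∑ l, star (ψ k) * ψ l * Sm k l
          = ∑ k, star (ψ k) * ψ k * (((M:ℝ)/N : ℝ) : ℂ) := by
            refine Finset.sum_congr rfl fun k _ => ?_
            rw [Finset.sum_eq_single k]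
            · rw [hD0 k k]; simp
            · intro l _ hl
              rw [hD0 k l, if_neg (fun h => hl h.symm)]
              simp
            · intro h; exact absurd (Finset.mem_univ k) h
        _ = (((M:ℝ)/N : ℝ) : ℂ) * cip ψ ψ := by
            rw [cip, Finset.mul_sum, ← Finset.sum_mul, Finset.sum_mul]
            exact Finset.sum_congr rfl fun k _ => by ring
    rw [this]
    simp [Complex.mul_re]
  · -- tight → equality
    intro ht
    refine le_antisymm ?_ hmain
    have hGpos : ∀ i j, 0 ≤ G i j := by
      intro i j; rw [hGdef]; positivity
    have hrow : ∀ i, ∑ j, G i j = (M:ℝ)/N := by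
      intro i
      have h1 : ∑ j, G i j = ∑ j, ‖cip (φ i) (φ j)‖ ^ 2 := by
        exact Finset.sum_congr rfl fun j _ => hGdef i j
      rw [h1, ht (φ i), hunit i]
      simp
    obtain ⟨k0, -, hk0⟩ := Finset.exists_mem_eq_sup' Finset.univ_nonempty hG.eigenvalues
    rw [hlam, hk0]
    set v : Fin M → ℝ := fun i => hG.eigenvectorBasis k0 i with hv
    have hEv : G *ᵥ v = hG.eigenvalues k0 • v := hG.mulVec_eigenvectorBasis k0
    have hvne : ∃ i, v i ≠ 0 := by
      by_contra h
      push_neg at h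
      have : hG.eigenvectorBasis k0 = 0 := by
        ext i
        exact h i
      exact hG.eigenvectorBasis.orthonormal.ne_zero k0 this
    obtain ⟨i0, -, hmax⟩ := Finset.exists_max_image Finset.univ (fun i => |v i|) Finset.univ_nonempty
    have hpos : 0 < |v i0| := by
      obtain ⟨i, hi⟩ := hvne
      exact lt_of_lt_of_le (abs_pos.2 hi) (hmax i (Finset.mem_univ i))
    have heig : hG.eigenvalues k0 * v i0 = ∑ j, G i0 j * v j := by
      have := congrFun hEv i0
      rw [Matrix.mulVec, dotProduct] at this
      simpa [Pi.smul_apply] using this.symm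
    have hbound : |hG.eigenvalues k0| * |v i0| ≤ ((M:ℝ)/N) * |v i0| := by
      calc |hG.eigenvalues k0| * |v i0| = |hG.eigenvalues k0 * v i0| := (abs_mul _ _).symm
        _ = |∑ j, G i0 j * v j| := by rw [heig]
        _ ≤ ∑ j, |G i0 j * v j| := Finset.abs_sum_le_sum_abs _ _
        _ = ∑ j, G i0 j * |v j| := by
            refine Finset.sum_congr rfl fun j _ => ?_
            rw [abs_mul, abs_of_nonneg (hGpos i0 j)]
        _ ≤ ∑ j, G i0 j * |v i0| := by
            refine Finset.sum_le_sum fun j _ => ?_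
            exact mul_le_mul_of_nonneg_left (hmax j (Finset.mem_univ j)) (hGpos i0 j)
        _ = ((M:ℝ)/N) * |v i0| := by rw [← Finset.sum_mul, hrow i0]
    have : |hG.eigenvalues k0| ≤ (M:ℝ)/N := le_of_mul_le_mul_right hbound hpos
    exact le_trans (le_abs_self _) this
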